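/- Let c ∈ ℕ, let G be a graph, and let [S, S̄] be a matching cut of G. If both induced subgraphs G[S] and G[S̄] admit a c-gel, then G admits a (c+1)-gel. -/

import Mathlib

/-- A walk is *increasing* with respect to an edge-labeling if the sequence of labels of its
edges, traversed from the first endpoint to the last, is non-decreasing. -/
def IsIncreasing {V : Type*} (G : SimpleGraph V) (lab : Sym2 V → ℝ) {x y : V}
    (p : G.Walk x y) : Prop :=
  (p.edges.map lab).Chain' (· ≤ ·)

/-- An edge-labeling is *good* if for every ordered pair `(x, y)` of vertices there do not
exist two distinct increasing paths from `x` to `y`. -/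
def IsGoodLabeling {V : Type*} (G : SimpleGraph V) (lab : Sym2 V → ℝ) : Prop :=
  ∀ (x y : V) (p q : G.Walk x y), p.IsPath → q.IsPath →
    IsIncreasing G lab p → IsIncreasing G lab q → p = q

/-- A `c`-gel: a good edge-labeling taking at most `c` distinct values on the edges. -/
def IsCGel {V : Type*} (G : SimpleGraph V) (c : ℕ) (lab : Sym2 V → ℝ) : Prop :=
  IsGoodLabeling G lab ∧ (lab '' G.edgeSet).ncard ≤ c

open SimpleGraph

section Aux

variable {V : Type*} {G : SimpleGraph V} {P : Set V} {lab : Sym2 V → ℝ}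

/-- The inclusion homomorphism from an induced subgraph. -/
def inclHom (G : SimpleGraph V) (P : Set V) : G.induce P →g G :=
  ⟨Subtype.val, fun h => h⟩

/-- Lift a walk whose support lies in `P` to the induced subgraph `G.induce P`. -/
def liftWalk : ∀ {x y : V} (p : G.Walk x y) (hx : x ∈ P) (hy : y ∈ P),
    (∀ v ∈ p.support, v ∈ P) → (G.induce P).Walk ⟨x, hx⟩ ⟨y, hy⟩
  | _, _, SimpleGraph.Walk.nil, _, _, _ => SimpleGraph.Walk.nil
  | _, _, SimpleGraph.Walk.cons h q, hx, hy, hp =>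
      SimpleGraph.Walk.cons (by exact h)
        (liftWalk q (hp _ (List.mem_cons_of_mem _ q.start_mem_support)) hy
          (fun v hv => hp v (List.mem_cons_of_mem _ hv)))

lemma liftWalk_map : ∀ {x y : V} (p : G.Walk x y) (hx : x ∈ P) (hy : y ∈ P)
    (hp : ∀ v ∈ p.support, v ∈ P),
    (liftWalk p hx hy hp).map (inclHom G P) = p
  | _, _, SimpleGraph.Walk.nil, _, _, _ => by rw [liftWalk]; rfl
  | _, _, SimpleGraph.Walk.cons h q, hx, hy, hp => by
      rw [liftWalk]; exact congrArg (SimpleGraph.Walk.cons h) (liftWalk_map q _ hy _)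

lemma chain'_congr_mem {α : Type*} {R S : α → α → Prop} {l : List α}
    (h : ∀ a ∈ l, ∀ b ∈ l, (R a b ↔ S a b)) : l.Chain' R ↔ l.Chain' S := by
  unfold List.Chain'
  rw [List.isChain_iff_getElem, List.isChain_iff_getElem]
  constructor <;> intro H i hi
  · exact (h _ (List.getElem_mem _) _ (List.getElem_mem _)).mp (H i hi)
  · exact (h _ (List.getElem_mem _) _ (List.getElem_mem _)).mpr (H i hi)

lemma isIncreasing_lift_iff {labP : Sym2 ↥P → ℝ}
    (hrefl : ∀ a ∈ (G.induce P).edgeSet, ∀ b ∈ (G.induce P).edgeSet,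
      (lab (Sym2.map Subtype.val a) ≤ lab (Sym2.map Subtype.val b) ↔ labP a ≤ labP b))
    {x y : ↥P} (p : (G.induce P).Walk x y) :
    IsIncreasing G lab (p.map (inclHom G P)) ↔ IsIncreasing (G.induce P) labP p := by
  unfold IsIncreasing
  unfold List.Chain'
  rw [SimpleGraph.Walk.edges_map, List.map_map, List.isChain_map, List.isChain_map]
  exact chain'_congr_mem fun a ha b hb =>
    hrefl a (p.edges_subset_edgeSet ha) b (p.edges_subset_edgeSet hb)

lemma same_side_eq {labP : Sym2 ↥P → ℝ} (hgood : IsGoodLabeling (G.induce P) labP)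
    (hrefl : ∀ a ∈ (G.induce P).edgeSet, ∀ b ∈ (G.induce P).edgeSet,
      (lab (Sym2.map Subtype.val a) ≤ lab (Sym2.map Subtype.val b) ↔ labP a ≤ labP b))
    {x y : V} (hx : x ∈ P) (hy : y ∈ P) (p q : G.Walk x y)
    (hp : p.IsPath) (hq : q.IsPath)
    (hps : ∀ v ∈ p.support, v ∈ P) (hqs : ∀ v ∈ q.support, v ∈ P)
    (hip : IsIncreasing G lab p) (hiq : IsIncreasing G lab q) : p = q := by
  have hpm := liftWalk_map p hx hy hps
  have hqm := liftWalk_map q hx hy hqs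
  have h1 : liftWalk p hx hy hps = liftWalk q hx hy hqs := by
    apply hgood
    · exact SimpleGraph.Walk.IsPath.of_map (f := inclHom G P) (by rw [hpm]; exact hp)
    · exact SimpleGraph.Walk.IsPath.of_map (f := inclHom G P) (by rw [hqm]; exact hq)
    · exact (isIncreasing_lift_iff hrefl _).mp (by rw [hpm]; exact hip)
    · exact (isIncreasing_lift_iff hrefl _).mp (by rw [hqm]; exact hiq)
  rw [← hpm, ← hqm, h1]

lemma isIncreasing_tail {x y w : V} {h : G.Adj x y} {q : G.Walk y w}
    (hinc : IsIncreasing G lab (SimpleGraph.Walk.cons h q)) : IsIncreasing G lab q := by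
  unfold IsIncreasing at hinc ⊢
  rw [SimpleGraph.Walk.edges_cons, List.map_cons] at hinc
  exact hinc.tail

lemma isIncreasing_of_concat {x z y : V} {p : G.Walk x z} {h : G.Adj z y}
    (hinc : IsIncreasing G lab (p.concat h)) : IsIncreasing G lab p := by
  unfold IsIncreasing at hinc ⊢
  rw [SimpleGraph.Walk.edges_concat, List.concat_eq_append, List.map_append] at hinc
  exact (List.isChain_append.1 hinc).1

lemma isPath_of_concat {x z y : V} {p : G.Walk x z} {h : G.Adj z y}
    (hp : (p.concat h).IsPath) : p.IsPath := by
  rw [SimpleGraph.Walk.concat_eq_append] at hp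
  exact hp.of_append_left

/-- Structure of increasing paths: they stay in `P` until possibly a final crossing edge. -/
lemma incr_structure {M : ℝ}
    (hub : ∀ u v, G.Adj u v → lab s(u, v) ≤ M)
    (hcr : ∀ u v, G.Adj u v → (lab s(u, v) = M ↔ (u ∈ P ↔ v ∉ P)))
    (hm : ∀ u v w, G.Adj u v → G.Adj v w → (u ∈ P ↔ v ∉ P) → (v ∈ P ↔ w ∉ P) → u = w) :
    ∀ {x y : V} (p : G.Walk x y), p.IsPath → IsIncreasing G lab p → x ∈ P →
      (∀ v ∈ p.support, v ∈ P) ∨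
      (y ∉ P ∧ ∃ (z : V) (h : G.Adj z y) (p' : G.Walk x z),
        p = p'.concat h ∧ (∀ v ∈ p'.support, v ∈ P)) := by
  intro x y p
  induction p with
  | nil =>
    intro _ _ hx
    left
    intro v hv
    rw [SimpleGraph.Walk.support_nil, List.mem_singleton] at hv
    exact hv ▸ hx
  | @cons u v w h q ih =>
    intro hp hinc hu
    by_cases hv : v ∈ P
    · rcases ih hp.of_cons (isIncreasing_tail hinc) hv with hall | ⟨hw, z, e, q', hq, hsup⟩
      · left
        intro t ht
        rw [SimpleGraph.Walk.support_cons, List.mem_cons] at ht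
        rcases ht with rfl | ht
        · exact hu
        · exact hall t ht
      · right
        refine ⟨hw, z, e, SimpleGraph.Walk.cons h q', ?_, ?_⟩
        · rw [hq, SimpleGraph.Walk.concat_cons]
        · intro t ht
          rw [SimpleGraph.Walk.support_cons, List.mem_cons] at ht
          rcases ht with rfl | ht
          · exact hu
          · exact hsup t ht
    · have hcross1 : (u ∈ P ↔ v ∉ P) := iff_of_true hu hv
      right
      cases q with
      | nil =>
        refine ⟨hv, u, h, SimpleGraph.Walk.nil, (SimpleGraph.Walk.concat_nil h).symm, ?_⟩
        intro t ht
        rw [SimpleGraph.Walk.support_nil, List.mem_singleton] at ht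
        exact ht ▸ hu
      | @cons _ v' _ h₂ r =>
        exfalso
        have hchain : lab s(u, v) ≤ lab s(v, v') := by
          unfold IsIncreasing at hinc
          rw [SimpleGraph.Walk.edges_cons, SimpleGraph.Walk.edges_cons, List.map_cons,
            List.map_cons] at hinc
          exact (List.isChain_cons_cons.1 hinc).1
        have h1 : lab s(u, v) = M := (hcr u v h).2 hcross1
        have h2 : lab s(v, v') = M := le_antisymm (hub _ _ h₂) (h1 ▸ hchain)
        have hcross2 := (hcr v v' h₂).1 h2
        have huv' : u = v' := hm u v v' h h₂ hcross1 hcross2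
        rw [SimpleGraph.Walk.cons_isPath_iff] at hp
        apply hp.2
        rw [SimpleGraph.Walk.support_cons]
        exact List.mem_cons_of_mem _ (huv' ▸ r.start_mem_support)

lemma rank_le_iff {T : Set ℝ} (hT : T.Finite) {a b : ℝ} (ha : a ∈ T) (hb : b ∈ T) :
    ((T ∩ Set.Iic a).ncard : ℝ) ≤ ((T ∩ Set.Iic b).ncard : ℝ) ↔ a ≤ b := by
  rw [Nat.cast_le]
  constructor
  · intro hle
    by_contra hab
    push_neg at hab
    have hss : T ∩ Set.Iic b ⊂ T ∩ Set.Iic a := by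
      refine ⟨Set.inter_subset_inter_right _ (Set.Iic_subset_Iic.2 hab.le), fun hsub => ?_⟩
      have : a ∈ T ∩ Set.Iic b := hsub ⟨ha, le_refl a⟩
      exact absurd this.2 (not_le.2 hab)
    exact absurd hle (not_le.2 (Set.ncard_lt_ncard hss (hT.subset Set.inter_subset_left)))
  · intro hab
    exact Set.ncard_le_ncard (Set.inter_subset_inter_right _ (Set.Iic_subset_Iic.2 hab))
      (hT.subset Set.inter_subset_left)

end Aux

/-- Let `[S, S̄]` be a matching cut of `G`: there is at least one edge between `S` and its
complement, and the edges between `S` and its complement are pairwise vertex-disjoint.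
If both `G[S]` and `G[S̄]` admit a `c`-gel, then `G` admits a `(c+1)`-gel. -/
theorem matching_cut_cgel {V : Type*} [Fintype V] (G : SimpleGraph V) (c : ℕ) (S : Set V)
    (hne : ∃ u w : V, u ∈ S ∧ w ∉ S ∧ G.Adj u w)
    (hmatch : ∀ u u' w w' : V, u ∈ S → u' ∈ S → w ∉ S → w' ∉ S →
      G.Adj u w → G.Adj u' w' → (u = u' ↔ w = w'))
    (hS : ∃ lab : Sym2 ↥S → ℝ, IsCGel (G.induce S) c lab)
    (hSc : ∃ lab : Sym2 ↥(Sᶜ) → ℝ, IsCGel (G.induce Sᶜ) c lab) :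
    ∃ lab : Sym2 V → ℝ, IsCGel G (c + 1) lab := by
  classical
  obtain ⟨labS, goodS, cardS⟩ := hS
  obtain ⟨labC, goodC, cardC⟩ := hSc
  set TS : Set ℝ := labS '' (G.induce S).edgeSet with hTSdef
  set TC : Set ℝ := labC '' (G.induce Sᶜ).edgeSet with hTCdef
  have finS : TS.Finite := Set.toFinite _
  have finC : TC.Finite := Set.toFinite _
  set fS : ℝ → ℝ := fun t => ((TS ∩ Set.Iic t).ncard : ℝ) with hfSdef
  set fC : ℝ → ℝ := fun t => ((TC ∩ Set.Iic t).ncard : ℝ) with hfCdef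
  set M : ℝ := (c : ℝ) + 1 with hMdef
  set lab : Sym2 V → ℝ := Sym2.lift ⟨fun u v =>
      if hu : u ∈ S then
        (if hv : v ∈ S then fS (labS s(⟨u, hu⟩, ⟨v, hv⟩)) else M)
      else
        (if hv : v ∈ S then M else fC (labC s(⟨u, hu⟩, ⟨v, hv⟩))),
    by
      intro u v
      by_cases hu : u ∈ S <;> by_cases hv : v ∈ S <;>
        simp only [hu, hv, dif_pos, dif_neg, not_false_iff]
      · rw [Sym2.eq_swap]
      · rw [Sym2.eq_swap]⟩ with hlabdef
  -- basic label computations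
  have lab_SS : ∀ (u v : V) (hu : u ∈ S) (hv : v ∈ S),
      lab s(u, v) = fS (labS s(⟨u, hu⟩, ⟨v, hv⟩)) := by
    intro u v hu hv
    rw [hlabdef, Sym2.lift_mk]; dsimp only
    rw [dif_pos hu, dif_pos hv]
  have lab_CC : ∀ (u v : V) (hu : u ∉ S) (hv : v ∉ S),
      lab s(u, v) = fC (labC s(⟨u, hu⟩, ⟨v, hv⟩)) := by
    intro u v hu hv
    rw [hlabdef, Sym2.lift_mk]; dsimp only
    rw [dif_neg hu, dif_neg hv]
  have lab_cross : ∀ u v : V, (u ∈ S ↔ v ∉ S) → lab s(u, v) = M := by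
    intro u v hc
    by_cases hu : u ∈ S
    · have hv : v ∉ S := hc.1 hu
      rw [hlabdef, Sym2.lift_mk]; dsimp only
      rw [dif_pos hu, dif_neg hv]
    · have hv : v ∈ S := not_not.1 (fun hv => hu (hc.2 hv))
      rw [hlabdef, Sym2.lift_mk]; dsimp only
      rw [dif_neg hu, dif_pos hv]
  -- bounds on the rank functions
  have hfS_le : ∀ t : ℝ, fS t ≤ (c : ℝ) := by
    intro t
    rw [hfSdef]; dsimp only
    have : (TS ∩ Set.Iic t).ncard ≤ c :=
      le_trans (Set.ncard_le_ncard Set.inter_subset_left finS) cardS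
    exact_mod_cast this
  have hfC_le : ∀ t : ℝ, fC t ≤ (c : ℝ) := by
    intro t
    rw [hfCdef]; dsimp only
    have : (TC ∩ Set.Iic t).ncard ≤ c :=
      le_trans (Set.ncard_le_ncard Set.inter_subset_left finC) cardC
    exact_mod_cast this
  have hub' : ∀ u v : V, G.Adj u v → lab s(u, v) ≤ M := by
    intro u v _
    by_cases hu : u ∈ S <;> by_cases hv : v ∈ S
    · rw [lab_SS u v hu hv, hMdef]; linarith [hfS_le (labS s(⟨u, hu⟩, ⟨v, hv⟩))]
    · rw [lab_cross u v (iff_of_true hu hv)]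
    · rw [lab_cross u v (iff_of_false hu (not_not_intro hv))]
    · rw [lab_CC u v hu hv, hMdef]; linarith [hfC_le (labC s(⟨u, hu⟩, ⟨v, hv⟩))]
  have hcr' : ∀ u v : V, G.Adj u v → (lab s(u, v) = M ↔ (u ∈ S ↔ v ∉ S)) := by
    intro u v _
    constructor
    · intro hl
      by_contra hc
      by_cases hu : u ∈ S <;> by_cases hv : v ∈ S
      · rw [lab_SS u v hu hv] at hl
        have := hfS_le (labS s(⟨u, hu⟩, ⟨v, hv⟩))
        rw [hl, hMdef] at this; linarith
      · exact hc (iff_of_true hu hv)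
      · exact hc (iff_of_false hu (not_not_intro hv))
      · rw [lab_CC u v hu hv] at hl
        have := hfC_le (labC s(⟨u, hu⟩, ⟨v, hv⟩))
        rw [hl, hMdef] at this; linarith
    · exact lab_cross u v
  have hm' : ∀ u v w : V, G.Adj u v → G.Adj v w → (u ∈ S ↔ v ∉ S) → (v ∈ S ↔ w ∉ S) →
      u = w := by
    intro u v w h1 h2 c1 c2
    by_cases hv : v ∈ S
    · have hu : u ∉ S := fun hu => (c1.1 hu) hv
      have hw : w ∉ S := c2.1 hv
      exact (hmatch v v u w hv hv hu hw h1.symm h2).1 rfl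
    · have hu : u ∈ S := c1.2 hv
      have hw : w ∈ S := not_not.1 (fun hw => hv (c2.2 hw))
      exact (hmatch u w v v hu hw hv hv h1 h2.symm).2 rfl
  have hcrC : ∀ u v : V, G.Adj u v → (lab s(u, v) = M ↔ (u ∈ Sᶜ ↔ v ∉ Sᶜ)) := by
    intro u v h
    rw [hcr' u v h]
    simp only [Set.mem_compl_iff]
    tauto
  have hmC : ∀ u v w : V, G.Adj u v → G.Adj v w → (u ∈ Sᶜ ↔ v ∉ Sᶜ) → (v ∈ Sᶜ ↔ w ∉ Sᶜ) →
      u = w := by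
    intro u v w h1 h2 c1 c2
    simp only [Set.mem_compl_iff] at c1 c2
    exact hm' u v w h1 h2 (by tauto) (by tauto)
  -- order reflection
  have lab_map_S : ∀ a ∈ (G.induce S).edgeSet, lab (Sym2.map Subtype.val a) = fS (labS a) := by
    intro a _
    induction a using Sym2.ind with
    | _ u v =>
      rw [Sym2.map_pair_eq, lab_SS u.val v.val u.2 v.2]
  have lab_map_C : ∀ a ∈ (G.induce Sᶜ).edgeSet,
      lab (Sym2.map Subtype.val a) = fC (labC a) := by
    intro a _
    induction a using Sym2.ind with
    | _ u v =>
      rw [Sym2.map_pair_eq, lab_CC u.val v.val u.2 v.2]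
  have hreflS : ∀ a ∈ (G.induce S).edgeSet, ∀ b ∈ (G.induce S).edgeSet,
      (lab (Sym2.map Subtype.val a) ≤ lab (Sym2.map Subtype.val b) ↔ labS a ≤ labS b) := by
    intro a ha b hb
    rw [lab_map_S a ha, lab_map_S b hb, hfSdef]
    exact rank_le_iff finS ⟨a, ha, rfl⟩ ⟨b, hb, rfl⟩
  have hreflC : ∀ a ∈ (G.induce Sᶜ).edgeSet, ∀ b ∈ (G.induce Sᶜ).edgeSet,
      (lab (Sym2.map Subtype.val a) ≤ lab (Sym2.map Subtype.val b) ↔ labC a ≤ labC b) := by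
    intro a ha b hb
    rw [lab_map_C a ha, lab_map_C b hb, hfCdef]
    exact rank_le_iff finC ⟨a, ha, rfl⟩ ⟨b, hb, rfl⟩
  -- goodness
  have hgood : IsGoodLabeling G lab := by
    intro x y p q hp hq hip hiq
    by_cases hx : x ∈ S
    · rcases incr_structure hub' hcr' hm' p hp hip hx with hall | ⟨hyS, z₁, e₁, p', hpz, hsup⟩
      · rcases incr_structure hub' hcr' hm' q hq hiq hx with hall' | ⟨hyS', _, _, _, _, _⟩
        · exact same_side_eq goodS hreflS hx (hall y p.end_mem_support) p q hp hq hall hall'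
            hip hiq
        · exact absurd (hall y p.end_mem_support) hyS'
      · rcases incr_structure hub' hcr' hm' q hq hiq hx with hall' | ⟨_, z₂, e₂, q', hqz, hsup'⟩
        · exact absurd (hall' y q.end_mem_support) hyS
        · have hz : z₁ = z₂ := hm' z₁ y z₂ e₁ e₂.symm
            (iff_of_true (hsup z₁ p'.end_mem_support) hyS)
            (iff_of_false hyS (not_not_intro (hsup' z₂ q'.end_mem_support)))
          subst hz
          have hpq : p' = q' := same_side_eq goodS hreflS hx (hsup z₁ p'.end_mem_support) p' q'
            (isPath_of_concat (hpz ▸ hp)) (isPath_of_concat (hqz ▸ hq)) hsup hsup'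
            (isIncreasing_of_concat (hpz ▸ hip)) (isIncreasing_of_concat (hqz ▸ hiq))
          rw [hpz, hqz, hpq]
    · have hx' : x ∈ Sᶜ := hx
      rcases incr_structure hub' hcrC hmC p hp hip hx' with hall | ⟨hyS, z₁, e₁, p', hpz, hsup⟩
      · rcases incr_structure hub' hcrC hmC q hq hiq hx' with hall' | ⟨hyS', _, _, _, _, _⟩
        · exact same_side_eq goodC hreflC hx' (hall y p.end_mem_support) p q hp hq hall hall'
            hip hiq
        · exact absurd (hall y p.end_mem_support) hyS'
      · rcases incr_structure hub' hcrC hmC q hq hiq hx' with hall' | ⟨_, z₂, e₂, q', hqz, hsup'⟩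
        · exact absurd (hall' y q.end_mem_support) hyS
        · have hz : z₁ = z₂ := hmC z₁ y z₂ e₁ e₂.symm
            (iff_of_true (hsup z₁ p'.end_mem_support) hyS)
            (iff_of_false hyS (not_not_intro (hsup' z₂ q'.end_mem_support)))
          subst hz
          have hpq : p' = q' := same_side_eq goodC hreflC hx' (hsup z₁ p'.end_mem_support) p' q'
            (isPath_of_concat (hpz ▸ hp)) (isPath_of_concat (hqz ▸ hq)) hsup hsup'
            (isIncreasing_of_concat (hpz ▸ hip)) (isIncreasing_of_concat (hqz ▸ hiq))
          rw [hpz, hqz, hpq]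
  -- cardinality
  refine ⟨lab, hgood, ?_⟩
  have hsub : lab '' G.edgeSet ⊆ (fun n : ℕ => (n : ℝ)) '' (Set.Icc 1 (c + 1)) := by
    rintro r ⟨e, he, rfl⟩
    induction e using Sym2.ind with
    | _ u v =>
      rw [SimpleGraph.mem_edgeSet] at he
      by_cases hu : u ∈ S <;> by_cases hv : v ∈ S
      · have hedge : (G.induce S).Adj ⟨u, hu⟩ ⟨v, hv⟩ := he
        have hmem : labS s(⟨u, hu⟩, ⟨v, hv⟩) ∈ TS :=
          ⟨_, (SimpleGraph.mem_edgeSet _).2 hedge, rfl⟩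
        rw [lab_SS u v hu hv, hfSdef]
        refine ⟨(TS ∩ Set.Iic (labS s(⟨u, hu⟩, ⟨v, hv⟩))).ncard, ⟨?_, ?_⟩, rfl⟩
        · have : 0 < (TS ∩ Set.Iic (labS s(⟨u, hu⟩, ⟨v, hv⟩))).ncard :=
            (Set.ncard_pos (finS.subset Set.inter_subset_left)).2 ⟨_, hmem, Set.mem_Iic.2 (le_refl _)⟩
          omega
        · exact le_trans (le_trans (Set.ncard_le_ncard Set.inter_subset_left finS) cardS)
            (Nat.le_succ c)
      · rw [lab_cross u v (iff_of_true hu hv), hMdef]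
        exact ⟨c + 1, ⟨by omega, le_refl _⟩, by push_cast; ring⟩
      · rw [lab_cross u v (iff_of_false hu (not_not_intro hv)), hMdef]
        exact ⟨c + 1, ⟨by omega, le_refl _⟩, by push_cast; ring⟩
      · have hedge : (G.induce Sᶜ).Adj ⟨u, hu⟩ ⟨v, hv⟩ := he
        have hmem : labC s(⟨u, hu⟩, ⟨v, hv⟩) ∈ TC :=
          ⟨_, (SimpleGraph.mem_edgeSet _).2 hedge, rfl⟩
        rw [lab_CC u v hu hv, hfCdef]
        refine ⟨(TC ∩ Set.Iic (labC s(⟨u, hu⟩, ⟨v, hv⟩))).ncard, ⟨?_, ?_⟩, rfl⟩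
        · have : 0 < (TC ∩ Set.Iic (labC s(⟨u, hu⟩, ⟨v, hv⟩))).ncard :=
            (Set.ncard_pos (finC.subset Set.inter_subset_left)).2 ⟨_, hmem, Set.mem_Iic.2 (le_refl _)⟩
          omega
        · exact le_trans (le_trans (Set.ncard_le_ncard Set.inter_subset_left finC) cardC)
            (Nat.le_succ c)
  calc (lab '' G.edgeSet).ncard
      ≤ ((fun n : ℕ => (n : ℝ)) '' (Set.Icc 1 (c + 1))).ncard :=
        Set.ncard_le_ncard hsub ((Set.finite_Icc _ _).image _)
    _ ≤ (Set.Icc 1 (c + 1)).ncard := Set.ncard_image_le (Set.finite_Icc _ _)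
    _ = c + 1 := by
        rw [← Finset.coe_Icc, Set.ncard_coe_finset, Nat.card_Icc]
        omega
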